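/- arXiv:1308.3810 — 3 statements merged into one kernel-verified Lean document; each statement's English description precedes it below -/
import Mathlib

section
/- If u is a sequence with r distinct letters, then every binary (r,s)-formation contains u if and only if s ≥ fw(u), where fw(u) is the formation width of u. -/
/-- The increasing sequence `1 2 ... c`. -/
def Ic (c : ℕ) : List ℕ := List.range' 1 c

/-- The decreasing sequence `c (c-1) ... 1`. -/
def Dc (c : ℕ) : List ℕ := (Ic c).reverse

/-- `k` concatenated copies of the list `l`. -/
def rep (l : List ℕ) (k : ℕ) : List ℕ := (List.replicate k l).flatten

/-- `up(c,t)`: the sequence `1 2 ... c` repeated `t` times. -/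
def upSeq (c t : ℕ) : List ℕ := rep (Ic c) t

/-- `alt(c,k)`: the concatenation of `k` permutations alternating `I_c, D_c, I_c, ...`. -/
def altSeq (c k : ℕ) : List ℕ :=
  ((List.range k).map (fun i => if i % 2 = 0 then Ic c else Dc c)).flatten

/-- A sequence `s` contains `u` if some subsequence of `s` is obtained from `u`
by an injective renaming of its letters. -/
def Contains (s u : List ℕ) : Prop :=
  ∃ f : ℕ → ℕ, Function.Injective f ∧ (u.map f).Sublist s

/-- `F` is an `(r,s)`-formation: a concatenation of `s` permutations of a set of
`r` distinct letters. -/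
def IsFormation (r s : ℕ) (F : List ℕ) : Prop :=
  ∃ (A : Finset ℕ) (ps : List (List ℕ)), A.card = r ∧ ps.length = s ∧
    (∀ p ∈ ps, p.Nodup ∧ p.toFinset = A) ∧ F = ps.flatten

/-- `F` is a binary `(r,s)`-formation: an `(r,s)`-formation in which every
constituent permutation equals a fixed permutation `p` or its reverse. -/
def IsBinaryFormation (r s : ℕ) (F : List ℕ) : Prop :=
  ∃ (A : Finset ℕ) (p : List ℕ) (ps : List (List ℕ)), A.card = r ∧
    p.Nodup ∧ p.toFinset = A ∧ ps.length = s ∧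
    (∀ q ∈ ps, q = p ∨ q = p.reverse) ∧ F = ps.flatten

/-- The formation width of `u`: the minimum `s` such that there exists `r` for which
every `(r,s)`-formation contains `u`. -/
noncomputable def fw (u : List ℕ) : ℕ :=
  sInf {s | ∃ r, ∀ F, IsFormation r s F → Contains F u}

/-- The formation length of `u`: the minimum `r` such that every `(r, fw u)`-formation
contains `u`. -/
noncomputable def fl (u : List ℕ) : ℕ :=
  sInf {r | ∀ F, IsFormation r (fw u) F → Contains F u}

/-- For a permutation `π` of `{1,...,c}`, the sequence `I_π = π(1) π(2) ... π(c)`. -/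
def Iperm {c : ℕ} (π : Equiv.Perm (Fin c)) : List ℕ :=
  List.ofFn (fun i => (π i).val + 1)

/-- `l(u)` for a sequence `u` on letters `1,...,c`: the smallest `k` such that
`up(c,k)` contains `u`. -/
noncomputable def lval (c : ℕ) (u : List ℕ) : ℕ := sInf {k | Contains (upSeq c k) u}

/-- `r(u)` for a sequence `u` on letters `1,...,c`: the smallest `k` such that
`alt(c,k)` contains `u`. -/
noncomputable def rval (c : ℕ) (u : List ℕ) : ℕ := sInf {k | Contains (altSeq c k) u}

/-- The binary formation `I_c^{e_1} D_c^{e_2} I_c^{e_3} ...` determined by the list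
of exponents `e` (blocks alternate starting with `I_c`). -/
def altBlocks (c : ℕ) (e : List ℕ) : List ℕ :=
  (((List.range e.length).zip e).map (fun p => rep (if p.1 % 2 = 0 then Ic c else Dc c) p.2)).flatten


namespace FwAux
section ES
open Finset Function

/- Erdős–Szekeres, copied from Mathlib Archive (Wiedijk100Theorems). -/
theorem erdos_szekeres {α : Type*} [LinearOrder α] {r s n : ℕ} {f : Fin n → α}
    (hn : r * s < n) (hf : Injective f) :
    (∃ t : Finset (Fin n), r < #t ∧ StrictMonoOn f ↑t) ∨
      ∃ t : Finset (Fin n), s < #t ∧ StrictAntiOn f ↑t := by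
  let inc_sequences_ending_in : Fin n → Finset (Finset (Fin n)) := fun i =>
    univ.powerset.filter fun t => Finset.max t = i ∧ StrictMonoOn f ↑t
  let dec_sequences_ending_in : Fin n → Finset (Finset (Fin n)) := fun i =>
    univ.powerset.filter fun t => Finset.max t = i ∧ StrictAntiOn f ↑t
  have inc_i : ∀ i, {i} ∈ inc_sequences_ending_in i := fun i => by
    simp [inc_sequences_ending_in, StrictMonoOn]
  have dec_i : ∀ i, {i} ∈ dec_sequences_ending_in i := fun i => by
    simp [dec_sequences_ending_in, StrictAntiOn]
  let ab' : Fin n → ℕ × ℕ := by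
    intro i
    apply
      (max' ((inc_sequences_ending_in i).image card) (Nonempty.image ⟨{i}, inc_i i⟩ _),
        max' ((dec_sequences_ending_in i).image card) (Nonempty.image ⟨{i}, dec_i i⟩ _))
  generalize hab : ab' = ab
  rsuffices ⟨i, hi⟩ : ∃ i, r < (ab i).1 ∨ s < (ab i).2
  · refine Or.imp ?_ ?_ hi
    on_goal 1 =>
      have : (ab i).1 ∈ image card (inc_sequences_ending_in i) := by
        simp only [← hab]; exact max'_mem _ (Nonempty.image ⟨{i}, inc_i i⟩ _)
    on_goal 2 =>
      have : (ab i).2 ∈ image card (dec_sequences_ending_in i) := by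
        simp only [← hab]; exact max'_mem _ (Nonempty.image ⟨{i}, dec_i i⟩ _)
    all_goals
      intro hi
      rw [mem_image] at this
      obtain ⟨t, ht₁, ht₂⟩ := this
      refine ⟨t, by rwa [ht₂], ?_⟩
      rw [mem_filter] at ht₁
      apply ht₁.2.2
  have : Injective ab := by
    simp only [← hab]
    apply Function.Injective.of_lt_imp_ne
    intro i j k q
    injection q with q₁ q₂
    cases lt_or_gt_of_ne fun _ => ne_of_lt ‹i < j› (hf ‹f i = f j›)
    on_goal 1 =>
      apply ne_of_lt _ q₁
      have : (ab' i).1 ∈ image card (inc_sequences_ending_in i) := by exact max'_mem _ (Nonempty.image ⟨{i}, inc_i i⟩ _)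
    on_goal 2 =>
      apply ne_of_lt _ q₂
      have : (ab' i).2 ∈ image card (dec_sequences_ending_in i) := by exact max'_mem _ (Nonempty.image ⟨{i}, dec_i i⟩ _)
    all_goals
      rw [Nat.lt_iff_add_one_le]
      apply le_max'
      rw [mem_image] at this ⊢
      rcases this with ⟨t, ht₁, ht₂⟩
      rw [mem_filter] at ht₁
      have : t.max = i := by simp only [ht₁.2.1]
      refine ⟨insert j t, ?_, ?_⟩
      · rw [mem_filter]
        refine ⟨?_, ?_, ?_⟩
        · rw [mem_powerset]; apply subset_univ
        · convert max_insert (a := j) (s := t)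
          rw [ht₁.2.1, max_eq_left]
          apply WithBot.coe_le_coe.mpr (le_of_lt ‹i < j›)
        simp only [StrictMonoOn, StrictAntiOn, coe_insert, Set.mem_insert_iff, mem_coe]
        rintro x ⟨rfl | _⟩ y ⟨rfl | _⟩ _
        · apply (irrefl _ ‹j < j›).elim
        · exfalso
          apply not_le_of_gt (_root_.trans ‹i < j› ‹j < y›) (le_max_of_eq ‹y ∈ t› ‹t.max = i›)
        · first
          | apply lt_of_le_of_lt _ ‹f i < f j›
          | apply lt_of_lt_of_le ‹f j < f i› _
          rcases lt_or_eq_of_le (le_max_of_eq ‹x ∈ t› ‹t.max = i›) with (_ | rfl)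
          · apply le_of_lt (ht₁.2.2 ‹x ∈ t› (mem_of_max ‹t.max = i›) ‹x < i›)
          · rfl
        · apply ht₁.2.2 ‹x ∈ t› ‹y ∈ t› ‹x < y›
      · rw [card_insert_of_notMem, ht₂]
        intro
        apply not_le_of_gt ‹i < j› (le_max_of_eq ‹j ∈ t› ‹t.max = i›)
  by_contra! q
  let ran : Finset (ℕ × ℕ) := (range r).image Nat.succ ×ˢ (range s).image Nat.succ
  have : image ab univ ⊆ ran := by
    rintro ⟨x₁, x₂⟩
    simp only [ran, mem_image, exists_prop, mem_range, mem_univ, mem_product, true_and,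
      Prod.ext_iff]
    rintro ⟨i, rfl, rfl⟩
    specialize q i
    have z : 1 ≤ (ab i).1 ∧ 1 ≤ (ab i).2 := by
      simp only [← hab]
      constructor <;>
        · apply le_max'
          rw [mem_image]
          exact ⟨{i}, by solve_by_elim, card_singleton i⟩
    exact ⟨⟨(ab i).1 - 1, by omega⟩, (ab i).2 - 1, by omega⟩
  apply not_le_of_gt hn
  simpa [ran, Nat.succ_injective, card_image_of_injective, ‹Injective ab›] using card_le_card this

end ES
end FwAux

namespace FwAux
open List

lemma exists_inj_extension (S : Finset ℕ) (g : ℕ → ℕ) (hg : Set.InjOn g S) :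
    ∃ h : ℕ → ℕ, Function.Injective h ∧ ∀ x ∈ S, h x = g x := by
  classical
  set M : ℕ := (S.image g).sup id + 1 with hM
  have hlt : ∀ x ∈ S, g x < M := by
    intro x hx
    have : g x ≤ (S.image g).sup id := Finset.le_sup (f := id) (Finset.mem_image_of_mem g hx)
    omega
  refine ⟨fun x => if x ∈ S then g x else x + M, ?_, fun x hx => if_pos hx⟩
  intro x y hxy
  by_cases hx : x ∈ S <;> by_cases hy : y ∈ S <;> simp only [hx, hy, if_pos, if_neg, if_true,
    if_false] at hxy
  · exact hg hx hy hxy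
  · exact absurd hxy (by have := hlt x hx; omega)
  · exact absurd hxy (by have := hlt y hy; omega)
  · omega

lemma contains_of_injOn {u F : List ℕ} (g : ℕ → ℕ) (hg : Set.InjOn g u.toFinset)
    (hsub : (u.map g).Sublist F) : Contains F u := by
  obtain ⟨h, hinj, hagree⟩ := exists_inj_extension u.toFinset g hg
  refine ⟨h, hinj, ?_⟩
  have : u.map h = u.map g :=
    List.map_congr_left fun x hx => hagree x (List.mem_toFinset.2 hx)
  rwa [this]

lemma contains_sublist {F G u : List ℕ} (h : Contains F u) (hFG : F.Sublist G) : Contains G u := by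
  obtain ⟨f, hf, hsub⟩ := h
  exact ⟨f, hf, hsub.trans hFG⟩

lemma join_eq_flatten (L : List (List ℕ)) : L.flatten = L.flatten := rfl

lemma sublist_join_of_mem_blocks : ∀ (v : List ℕ) (qs : List (List ℕ)),
    v.length ≤ qs.length → (∀ x ∈ v, ∀ q ∈ qs, x ∈ q) → v.Sublist qs.flatten
  | [], qs, _, _ => List.nil_sublist _
  | x :: v, q :: qs, hlen, hmem => by
    rw [join_eq_flatten, List.flatten_cons]
    have h1 : [x] <+ q := List.singleton_sublist.2 (hmem x (List.mem_cons_self) q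
      (List.mem_cons_self))
    have h2 : v <+ qs.flatten := sublist_join_of_mem_blocks v qs (by simpa using hlen)
      (fun y hy q' hq' => hmem y (List.mem_cons_of_mem _ hy) q' (List.mem_cons_of_mem _ hq'))
    exact h1.append h2

lemma filter_join (L : List (List ℕ)) (p : ℕ → Bool) :
    (L.flatten).filter p = (L.map (List.filter p)).flatten := by
  induction L with
  | nil => rfl
  | cons a L ih => simp only [join_eq_flatten, List.flatten_cons, List.filter_append,
      List.map_cons] at *; rw [ih]

lemma pairwise_imp_of_mem' {α : Type*} {l : List α} {R S : α → α → Prop} (h : l.Pairwise R)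
    (hi : ∀ a ∈ l, ∀ b ∈ l, R a b → S a b) : l.Pairwise S := by
  induction l with
  | nil => exact Pairwise.nil
  | cons a l ih =>
    rcases pairwise_cons.1 h with ⟨h1, h2⟩
    exact pairwise_cons.2 ⟨fun b hb => hi a (mem_cons_self) b (mem_cons_of_mem _ hb) (h1 b hb),
      ih h2 (fun x hx y hy => hi x (mem_cons_of_mem _ hx) y (mem_cons_of_mem _ hy))⟩

lemma filter_map'' {α β : Type*} (l : List α) (f : α → β) (p : β → Bool) :
    (l.map f).filter p = (l.filter (p ∘ f)).map f := by
  induction l with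
  | nil => rfl
  | cons a l ih =>
    simp only [List.map_cons, List.filter_cons]
    split <;> simp_all [Function.comp]

/-- A strictly sorted list with given `toFinset` is the sorted enumeration. -/
lemma sorted_eq_sort {l : List ℕ} {B : Finset ℕ} (hs : l.Pairwise (· < ·)) (ht : l.toFinset = B) :
    l = B.sort (· ≤ ·) := by
  have hnd : l.Nodup := hs.nodup
  have hperm : l ~ B.sort (· ≤ ·) :=
    List.perm_of_nodup_nodup_toFinset_eq hnd (B.sort_nodup _) (by rw [ht, Finset.sort_toFinset])
  exact hperm.eq_of_pairwise' (hs.imp le_of_lt) (B.pairwise_sort _)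

lemma toFinset_filter_mem {q : List ℕ} {B : Finset ℕ} (h : ↑B ⊆ {x | x ∈ q}) :
    (q.filter (fun x => decide (x ∈ B))).toFinset = B := by
  ext a
  simp only [List.mem_toFinset, List.mem_filter, decide_eq_true_eq]
  exact ⟨fun ⟨_, h2⟩ => h2, fun ha => ⟨h ha, ha⟩⟩

lemma nodup_length_eq_card {q : List ℕ} {A : Finset ℕ} (hnd : q.Nodup) (ht : q.toFinset = A) :
    q.length = A.card := by
  rw [← ht, List.toFinset_card_of_nodup hnd]

end FwAux

namespace FwAux
open List

/-- From a nodup list of length > m*m, extract `m+1` letters on which it is monotone. -/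
lemma es_step {q : List ℕ} (hnd : q.Nodup) {m : ℕ} (hcard : m * m < q.length) :
    ∃ t : Finset ℕ, (↑t ⊆ {x | x ∈ q}) ∧ m < t.card ∧
      ((q.filter (fun x => decide (x ∈ t))).Pairwise (· < ·) ∨
        (q.filter (fun x => decide (x ∈ t))).Pairwise (· > ·)) := by
  classical
  have hinj : Function.Injective q.get := List.nodup_iff_injective_get.1 hnd
  have key : ∀ (t : Finset (Fin q.length)),
      (StrictMonoOn q.get ↑t → (q.filter (fun x => decide (x ∈ t.image q.get))).Pairwise (· < ·)) ∧
      (StrictAntiOn q.get ↑t → (q.filter (fun x => decide (x ∈ t.image q.get))).Pairwise (· > ·)) := by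
    intro t
    set B := t.image q.get with hB
    have hmemB : ∀ i : Fin q.length, (q.get i ∈ B) ↔ i ∈ t := by
      intro i
      simp only [hB, Finset.mem_image]
      exact ⟨fun ⟨j, hj, hij⟩ => by rwa [← hinj hij], fun hi => ⟨i, hi, rfl⟩⟩
    have hfe : q.filter (fun x => decide (x ∈ B)) =
        ((List.finRange q.length).filter (fun i => decide (q.get i ∈ B))).map q.get := by
      conv_lhs => rw [← List.map_get_finRange q]
      exact filter_map'' _ _ _
    have hL : ∀ i ∈ (List.finRange q.length).filter (fun i => decide (q.get i ∈ B)), i ∈ t := by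
      intro i hi
      have := (List.mem_filter.1 hi).2
      simp only [decide_eq_true_eq] at this
      exact (hmemB i).1 this
    have hLp : ((List.finRange q.length).filter (fun i => decide (q.get i ∈ B))).Pairwise (· < ·) :=
      (List.pairwise_lt_finRange q.length).sublist (List.filter_sublist)
    constructor
    · intro hmono
      rw [hfe]
      exact (List.pairwise_map).2
        (pairwise_imp_of_mem' hLp fun a ha b hb hab => hmono (hL a ha) (hL b hb) hab)
    · intro hanti
      rw [hfe]
      exact (List.pairwise_map).2
        (pairwise_imp_of_mem' hLp fun a ha b hb hab => hanti (hL a ha) (hL b hb) hab)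
  rcases erdos_szekeres (r := m) (s := m) hcard hinj with ⟨t, htc, hmono⟩ | ⟨t, htc, hanti⟩
  · refine ⟨t.image q.get, ?_, ?_, Or.inl ((key t).1 hmono)⟩
    · intro x hx
      simp only [Finset.coe_image, Set.mem_image] at hx
      obtain ⟨i, _, rfl⟩ := hx
      simpa using List.get_mem q i.1 i.2
    · rwa [Finset.card_image_of_injective _ hinj]
  · refine ⟨t.image q.get, ?_, ?_, Or.inr ((key t).2 hanti)⟩
    · intro x hx
      simp only [Finset.coe_image, Set.mem_image] at hx
      obtain ⟨i, _, rfl⟩ := hx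
      simpa using List.get_mem q i.1 i.2
    · rwa [Finset.card_image_of_injective _ hinj]

end FwAux

namespace FwAux
open List

def esBound : ℕ → ℕ → ℕ
  | 0, r => r
  | s + 1, r => esBound s r * esBound s r + 1

lemma es_many : ∀ (s r : ℕ) (A : Finset ℕ) (qs : List (List ℕ)), qs.length = s →
    (∀ q ∈ qs, q.Nodup ∧ q.toFinset = A) → esBound s r ≤ A.card →
    ∃ B, B ⊆ A ∧ B.card = r ∧ ∀ q ∈ qs,
      ((q.filter (fun x => decide (x ∈ B))).Pairwise (· < ·) ∨
        (q.filter (fun x => decide (x ∈ B))).Pairwise (· > ·)) := by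
  intro s
  induction s with
  | zero =>
    intro r A qs hlen _ hcard
    obtain ⟨B, hBA, hBcard⟩ := Finset.exists_subset_card_eq hcard
    refine ⟨B, hBA, hBcard, fun q hq => ?_⟩
    rw [List.length_eq_zero_iff.1 hlen] at hq
    exact absurd hq (List.not_mem_nil)
  | succ s ih =>
    intro r A qs hlen hblocks hcard
    match qs, hlen with
    | q :: qs', hlen =>
      have hq := hblocks q (List.mem_cons_self)
      set m := esBound s r with hm
      have hqlen : m * m < q.length := by
        rw [nodup_length_eq_card hq.1 hq.2]
        simpa [esBound, ← hm] using hcard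
      obtain ⟨t, htq, htm, hts⟩ := es_step hq.1 hqlen
      -- trim t to exactly m elements
      obtain ⟨t', ht't, ht'card⟩ := Finset.exists_subset_card_eq (le_of_lt htm)
      have ht'A : t' ⊆ A := fun x hx => by
        have : x ∈ q := htq (ht't hx)
        rw [← hq.2]; exact List.mem_toFinset.2 this
      -- restricted blocks over t'
      set qs'' := qs'.map (fun q' => q'.filter (fun x => decide (x ∈ t'))) with hqs''
      have hblocks'' : ∀ q'' ∈ qs'', q''.Nodup ∧ q''.toFinset = t' := by
        intro q'' hq''
        rw [hqs'', List.mem_map] at hq''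
        obtain ⟨q', hq', rfl⟩ := hq''
        have hb := hblocks q' (List.mem_cons_of_mem _ hq')
        refine ⟨hb.1.filter _, toFinset_filter_mem ?_⟩
        intro x hx
        have : x ∈ A := ht'A hx
        rw [← hb.2] at this
        exact List.mem_toFinset.1 this
      obtain ⟨B, hBt', hBcard, hBs⟩ := ih r t' qs'' (by simp [hqs'', ← Nat.succ_injective hlen])
        hblocks'' (le_of_eq ht'card.symm)
      refine ⟨B, hBt'.trans ht'A, hBcard, ?_⟩
      have hfilter_eq : ∀ q' : List ℕ,
          (q'.filter (fun x => decide (x ∈ t'))).filter (fun x => decide (x ∈ B)) =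
            q'.filter (fun x => decide (x ∈ B)) := by
        intro q'
        rw [List.filter_filter]
        apply List.filter_congr
        intro x _
        by_cases hx : x ∈ B
        · simp [hx, hBt' hx]
        · simp [hx]
      intro q0 hq0
      rcases List.mem_cons.1 hq0 with rfl | hq0'
      · -- first block: q0.filter(∈B) is a filter of q0.filter(∈t) hence sorted
        have sub1 : q0.filter (fun x => decide (x ∈ B)) <+ q0.filter (fun x => decide (x ∈ t)) := by
          rw [← hfilter_eq q0]
          have sub0 : (q0.filter (fun x => decide (x ∈ t'))) <+ q0.filter (fun x => decide (x ∈ t)) := by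
            rw [show (fun x => decide (x ∈ t')) = (fun x => decide (x ∈ t') && decide (x ∈ t)) from
              funext fun x => by by_cases hx : x ∈ t' <;> simp [hx, fun h => ht't h]]
            rw [← List.filter_filter]
            exact List.filter_sublist
          exact (List.filter_sublist).trans sub0
        rcases hts with hs | hs
        · exact Or.inl (hs.sublist sub1)
        · exact Or.inr (hs.sublist sub1)
      · have := hBs (q0.filter (fun x => decide (x ∈ t')))
          (by rw [hqs'', List.mem_map]; exact ⟨q0, hq0', rfl⟩)
        rwa [hfilter_eq q0] at this
end FwAux

namespace FwAux
open List

/-- Every (r, |u|)-formation contains u, where r = number of distinct letters of u. -/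
lemma base_formation {u : List ℕ} {r : ℕ} (h : u.toFinset.card = r) :
    ∀ F, IsFormation r u.length F → Contains F u := by
  classical
  rintro F ⟨A, ps, hA, hlen, hblocks, rfl⟩
  have hcard : u.toFinset.card = A.card := h.trans hA.symm
  let e := Finset.equivOfCardEq hcard
  set g : ℕ → ℕ := fun x => if hx : x ∈ u.toFinset then ((e ⟨x, hx⟩ : A) : ℕ) else 0 with hg
  apply contains_of_injOn g
  · intro x hx y hy hxy
    simp only [hg] at hxy
    rw [dif_pos (Finset.mem_coe.1 hx), dif_pos (Finset.mem_coe.1 hy)] at hxy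
    have := e.injective (Subtype.ext hxy)
    exact Subtype.ext_iff.1 this
  · apply sublist_join_of_mem_blocks
    · rw [List.length_map, hlen]
    · intro x hx q hq
      rw [List.mem_map] at hx
      obtain ⟨a, ha, rfl⟩ := hx
      have haf : a ∈ u.toFinset := List.mem_toFinset.2 ha
      have : g a ∈ A := by
        simp only [hg, dif_pos haf]
        exact (e ⟨a, haf⟩).2
      rw [← (hblocks q hq).2] at this
      exact List.mem_toFinset.1 this

lemma fwSet_nonempty {u : List ℕ} {r : ℕ} (h : u.toFinset.card = r) :
    {s | ∃ r', ∀ F, IsFormation r' s F → Contains F u}.Nonempty :=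
  ⟨u.length, r, base_formation h⟩

/-- Monotonicity: if all (r',t)-formations contain u and t ≤ s, all (r',s)-formations do. -/
lemma formation_mono {u : List ℕ} {r' t s : ℕ} (hts : t ≤ s)
    (H : ∀ F, IsFormation r' t F → Contains F u) :
    ∀ F, IsFormation r' s F → Contains F u := by
  rintro F ⟨A, ps, hA, hlen, hblocks, rfl⟩
  have h0 : IsFormation r' t (ps.take t).flatten :=
    ⟨A, ps.take t, hA, by rw [List.length_take, hlen]; exact min_eq_left hts,
      fun q hq => hblocks q (List.mem_of_mem_take hq), rfl⟩
  have hsub : (ps.take t).flatten <+ ps.flatten := by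
    conv_rhs => rw [← List.take_append_drop t ps]
    rw [join_eq_flatten, join_eq_flatten, List.flatten_append]
    exact List.sublist_append_left _ _
  exact contains_sublist (H _ h0) hsub

lemma fw_le_iff {u : List ℕ} {r : ℕ} (h : u.toFinset.card = r) {s : ℕ} :
    fw u ≤ s ↔ ∃ r', ∀ F, IsFormation r' s F → Contains F u := by
  constructor
  · intro hfw
    obtain ⟨r', hr'⟩ := Nat.sInf_mem (fwSet_nonempty h)
    exact ⟨r', formation_mono hfw hr'⟩
  · intro hs
    exact Nat.sInf_le hs

end FwAux

namespace FwAux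
open List

lemma forward {u : List ℕ} {r s : ℕ} (h : u.toFinset.card = r)
    (H : ∀ F, IsBinaryFormation r s F → Contains F u) : fw u ≤ s := by
  classical
  rw [fw_le_iff h]
  refine ⟨esBound s r, fun F hF => ?_⟩
  obtain ⟨A, ps, hA, hlen, hblocks, rfl⟩ := hF
  obtain ⟨B, hBA, hBcard, hBs⟩ := es_many s r A ps hlen hblocks (le_of_eq hA.symm)
  have hbin : IsBinaryFormation r s ((ps.flatten).filter (fun x => decide (x ∈ B))) := by
    refine ⟨B, B.sort (· ≤ ·), ps.map (List.filter (fun x => decide (x ∈ B))), hBcard,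
      B.sort_nodup _, Finset.sort_toFinset _ _, by rw [List.length_map, hlen], ?_,
      (filter_join ps _)⟩
    intro q' hq'
    rw [List.mem_map] at hq'
    obtain ⟨q, hq, rfl⟩ := hq'
    have hsubq : ↑B ⊆ {x | x ∈ q} := by
      intro x hx
      have hxA : x ∈ A := hBA hx
      rw [← (hblocks q hq).2] at hxA
      exact List.mem_toFinset.1 hxA
    rcases hBs q hq with hs1 | hs1
    · exact Or.inl (sorted_eq_sort hs1 (toFinset_filter_mem hsubq))
    · refine Or.inr ?_
      have h2 : (q.filter (fun x => decide (x ∈ B))).reverse.Pairwise (· < ·) :=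
        List.pairwise_reverse.2 hs1
      have hft : (q.filter (fun x => decide (x ∈ B))).reverse.toFinset = B := by
        rw [List.toFinset_reverse]
        exact toFinset_filter_mem hsubq
      have h3 := sorted_eq_sort h2 hft
      rw [← h3, List.reverse_reverse]
  exact contains_sublist (H _ hbin) (List.filter_sublist)

lemma backward {u : List ℕ} {r s : ℕ} (h : u.toFinset.card = r) (hfw : fw u ≤ s) :
    ∀ F, IsBinaryFormation r s F → Contains F u := by
  classical
  obtain ⟨r', hr'⟩ := (fw_le_iff h).1 hfw
  rintro F ⟨A, p, ps, hA, hpnd, hpA, hlen, hbl, rfl⟩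
  set P := List.range r' with hP
  set φ : List ℕ → List ℕ := fun q => if q = p then P else P.reverse with hφ
  set qs := ps.map φ with hqs
  have hGform : IsFormation r' s qs.flatten := by
    refine ⟨P.toFinset, qs, ?_, by rw [hqs, List.length_map, hlen], ?_, rfl⟩
    · rw [List.toFinset_card_of_nodup (List.nodup_range), List.length_range]
    · intro q'' hq''
      rw [hqs, List.mem_map] at hq''
      obtain ⟨q, hq, rfl⟩ := hq''
      by_cases hqp : q = p
      · rw [hφ]; simp only [if_pos hqp]
        exact ⟨List.nodup_range, by simp⟩
      · rw [hφ]; simp only [if_neg hqp]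
        exact ⟨List.nodup_reverse.2 (List.nodup_range), List.toFinset_reverse⟩
  obtain ⟨f, hfinj, hfsub⟩ := hr' _ hGform
  set B := u.toFinset.image f with hB
  have hBcard : B.card = r := by rw [hB, Finset.card_image_of_injective _ hfinj, h]
  have hBP : ↑B ⊆ {x | x ∈ P} := by
    intro a ha
    simp only [hB, Finset.coe_image, Set.mem_image, Finset.mem_coe] at ha
    obtain ⟨x, hx, rfl⟩ := ha
    have h1 : f x ∈ u.map f := List.mem_map_of_mem (List.mem_toFinset.1 hx)
    have h2 : f x ∈ qs.flatten := hfsub.subset h1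
    rw [join_eq_flatten, List.mem_flatten] at h2
    obtain ⟨q'', hq'', hmem⟩ := h2
    rw [hqs, List.mem_map] at hq''
    obtain ⟨q, hq, rfl⟩ := hq''
    by_cases hqp : q = p
    · rw [hφ] at hmem; simp only [if_pos hqp] at hmem; exact hmem
    · rw [hφ] at hmem; simp only [if_neg hqp] at hmem; exact List.mem_reverse.1 hmem
  set bs := B.sort (· ≤ ·) with hbs
  have hbsnd : bs.Nodup := B.sort_nodup _
  have hbslen : bs.length = r := by rw [hbs, Finset.length_sort, hBcard]
  have hplen : p.length = r := by rw [nodup_length_eq_card hpnd hpA, hA]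
  set g : ℕ → ℕ := fun x => p.getD (bs.idxOf x) 0 with hg
  have hbsg : bs.map g = p := by
    apply List.ext_getElem (by rw [List.length_map, hbslen, hplen])
    intro i h1 h2
    rw [List.getElem_map]
    simp only [hg]
    rw [hbsnd.idxOf_getElem]
    exact List.getD_eq_getElem p 0 h2
  have hbsrev : bs.reverse.map g = p.reverse := by rw [List.map_reverse, hbsg]
  have hPfilt : P.filter (fun x => decide (x ∈ B)) = bs := by
    rw [hbs]
    apply sorted_eq_sort
    · exact (List.pairwise_lt_range).sublist (List.filter_sublist)
    · exact toFinset_filter_mem hBP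
  have hPrfilt : P.reverse.filter (fun x => decide (x ∈ B)) = bs.reverse := by
    rw [List.filter_reverse, hPfilt]
  have hball : ∀ q ∈ ps, ((φ q).filter (fun x => decide (x ∈ B))).map g = q := by
    intro q hq
    by_cases hqp : q = p
    · rw [hφ]; simp only [if_pos hqp]
      rw [hPfilt, hbsg, hqp]
    · have hq' : q = p.reverse := (hbl q hq).resolve_left hqp
      rw [hφ]; simp only [if_neg hqp]
      rw [hPrfilt, hbsrev, hq']
  have hkey : ((qs.flatten.filter (fun x => decide (x ∈ B))).map g) = ps.flatten := by
    rw [filter_join, join_eq_flatten, join_eq_flatten, List.map_flatten, hqs,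
      List.map_map, List.map_map]
    refine congrArg List.flatten ?_
    refine (List.map_congr_left ?_).trans (List.map_id ps)
    intro q hq
    exact hball q hq
  have hgInj : ∀ a ∈ B, ∀ b ∈ B, g a = g b → a = b := by
    intro a ha b hb hab
    have ha' : a ∈ bs := (Finset.mem_sort _).2 ha
    have hb' : b ∈ bs := (Finset.mem_sort _).2 hb
    have hia : bs.idxOf a < bs.length := List.idxOf_lt_length_iff.2 ha'
    have hib : bs.idxOf b < bs.length := List.idxOf_lt_length_iff.2 hb'
    have hia' : bs.idxOf a < p.length := by omega
    have hib' : bs.idxOf b < p.length := by omega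
    simp only [hg] at hab
    rw [List.getD_eq_getElem p 0 hia', List.getD_eq_getElem p 0 hib'] at hab
    have := (hpnd.getElem_inj_iff).1 hab
    exact (List.idxOf_inj ha').1 this
  apply contains_of_injOn (g ∘ f)
  · intro x hx y hy hxy
    have hfx : f x ∈ B := Finset.mem_image_of_mem f (Finset.mem_coe.1 hx)
    have hfy : f y ∈ B := Finset.mem_image_of_mem f (Finset.mem_coe.1 hy)
    exact hfinj (hgInj _ hfx _ hfy hxy)
  · have h1 : (u.map f).filter (fun x => decide (x ∈ B)) = u.map f := by
      apply List.filter_eq_self.2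
      intro a ha
      rw [List.mem_map] at ha
      obtain ⟨x, hx, rfl⟩ := ha
      simp only [decide_eq_true_eq]
      exact Finset.mem_image_of_mem f (List.mem_toFinset.2 hx)
    have h2 : (u.map f).filter (fun x => decide (x ∈ B)) <+
        qs.flatten.filter (fun x => decide (x ∈ B)) := hfsub.filter _
    calc u.map (g ∘ f) = ((u.map f).filter (fun x => decide (x ∈ B))).map g := by
            rw [h1, List.map_map]
      _ <+ (qs.flatten.filter (fun x => decide (x ∈ B))).map g := h2.map g
      _ = ps.flatten := hkey

end FwAux

theorem stmt2 (u : List ℕ) (r : ℕ) (h : u.toFinset.card = r) (s : ℕ) :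
    (∀ F, IsBinaryFormation r s F → Contains F u) ↔ fw u ≤ s :=
  ⟨fun H => FwAux.forward h H, fun hfw => FwAux.backward h hfw⟩
end

section
/- If u is a nonempty sequence and v is obtained from u by inserting a single occurrence of a letter that does not occur in u, then fw(u) = fw(v). -/
open List


lemma mem_zip_tail : ∀ (l : List ℕ) (a b : ℕ), ((a, b) ∈ l.zip l.tail ↔ ∃ P Q, l = P ++ a :: b :: Q) := by
  intro l
  induction l with
  | nil => intro a b; simp
  | cons c l ih =>
    intro a b
    cases l with
    | nil =>
      simp only [tail_cons, zip_nil_right]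
      constructor
      · intro h; simp at h
      · rintro ⟨P, Q, h⟩
        have := congrArg List.length h
        simp at this; omega
    | cons d l' =>
      have hz : (c :: d :: l').zip (c :: d :: l').tail = (c, d) :: ((d :: l').zip (d :: l').tail) := by
        simp [zip_cons_cons]
      rw [hz]
      constructor
      · intro h
        rcases mem_cons.mp h with h1 | h2
        · simp only [Prod.mk.injEq] at h1
          exact ⟨[], l', by simp [h1.1, h1.2]⟩
        · obtain ⟨P, Q, hPQ⟩ := (ih a b).1 h2
          exact ⟨c :: P, Q, by simp [hPQ]⟩
      · rintro ⟨P, Q, hPQ⟩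
        cases P with
        | nil =>
          simp only [nil_append, cons.injEq] at hPQ
          obtain ⟨h1, h2, h3⟩ := hPQ
          subst h1; subst h2
          exact mem_cons_self
        | cons p P' =>
          simp only [cons_append, cons.injEq] at hPQ
          exact mem_cons_of_mem _ ((ih a b).2 ⟨P', Q, hPQ.2⟩)

lemma map_fst_zip_sublist : ∀ (l l' : List ℕ), (((l.zip l').map Prod.fst).Sublist l) := by
  intro l
  induction l with
  | nil => simp
  | cons a l ih =>
    intro l'
    cases l' with
    | nil => simp
    | cons b l' => simpa [zip_cons_cons] using (ih l').cons₂ a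

lemma map_snd_zip_sublist : ∀ (l l' : List ℕ), (((l.zip l').map Prod.snd).Sublist l') := by
  intro l
  induction l with
  | nil => simp
  | cons a l ih =>
    intro l'
    cases l' with
    | nil => simp
    | cons b l' => simpa [zip_cons_cons] using (ih l').cons₂ b

lemma count_blocks_le (ps : List (List ℕ)) (hnd : ∀ p ∈ ps, p.Nodup) (a : ℕ) :
    ps.flatten.count a ≤ ps.length := by
  induction ps with
  | nil => simp
  | cons p ps ih =>
    simp only [flatten_cons, count_append, length_cons]
    have h1 : p.count a ≤ 1 := nodup_iff_count_le_one.mp (hnd p (mem_cons_self)) a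
    have h2 := ih (fun q hq => hnd q (mem_cons_of_mem _ hq))
    omega

/-- neighbors of `a` in the word `F`: letters adjacent to an occurrence of `a` -/
def nbr (F : List ℕ) (a : ℕ) : Finset ℕ :=
  (((F.zip F.tail).filter (fun p => p.1 = a)).map Prod.snd
    ++ ((F.zip F.tail).filter (fun p => p.2 = a)).map Prod.fst).toFinset

lemma mem_nbr {F : List ℕ} {a b : ℕ} :
    b ∈ nbr F a ↔ (a, b) ∈ F.zip F.tail ∨ (b, a) ∈ F.zip F.tail := by
  simp only [nbr, mem_toFinset, mem_append, mem_map, mem_filter]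
  constructor
  · rintro (⟨⟨x, y⟩, ⟨hm, hx⟩, hy⟩ | ⟨⟨x, y⟩, ⟨hm, hy⟩, hx⟩)
    · left; simp only [decide_eq_true_eq] at hx; subst hx; subst hy; exact hm
    · right; simp only [decide_eq_true_eq] at hy; subst hy; subst hx; exact hm
  · rintro (h | h)
    · exact Or.inl ⟨(a, b), ⟨h, by simp⟩, rfl⟩
    · exact Or.inr ⟨(b, a), ⟨h, by simp⟩, rfl⟩

lemma card_nbr_le (F : List ℕ) (a : ℕ) : (nbr F a).card ≤ 2 * F.count a := by
  refine (toFinset_card_le _).trans ?_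
  rw [length_append, length_map, length_map, ← countP_eq_length_filter, ← countP_eq_length_filter]
  have h1 : countP (fun p => decide (p.1 = a)) (F.zip F.tail) ≤ F.count a := by
    have : count a ((F.zip F.tail).map Prod.fst) = countP (fun p => decide (p.1 = a)) (F.zip F.tail) := by
      rw [count_eq_countP, countP_map]
      apply countP_congr
      intro p _
      simp only [Function.comp_apply]
      rw [Bool.eq_iff_iff]
      simp
    rw [← this]
    exact ((map_fst_zip_sublist F F.tail).count_le a)
  have h2 : countP (fun p => decide (p.2 = a)) (F.zip F.tail) ≤ F.count a := by
    have : count a ((F.zip F.tail).map Prod.snd) = countP (fun p => decide (p.2 = a)) (F.zip F.tail) := by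
      rw [count_eq_countP, countP_map]
      apply countP_congr
      intro p _
      simp only [Function.comp_apply]
      rw [Bool.eq_iff_iff]
      simp
    rw [← this]
    exact ((map_snd_zip_sublist F F.tail).count_le a).trans ((tail_sublist F).count_le a)
  omega

lemma greedy (N : ℕ → Finset ℕ) (hsym : ∀ a b, a ∈ N b ↔ b ∈ N a) (d : ℕ) :
    ∀ (r : ℕ) (S : Finset ℕ), (∀ a ∈ S, a ∉ N a) → (∀ a ∈ S, (N a).card ≤ d) →
      r * (d + 1) ≤ S.card → ∃ B ⊆ S, B.card = r ∧ ∀ a ∈ B, ∀ b ∈ B, b ∉ N a := by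
  intro r
  induction r with
  | zero => exact fun S _ _ _ => ⟨∅, by simp⟩
  | succ r ih =>
    intro S hloop hdeg hcard
    have hS : S.Nonempty := by
      rw [← Finset.card_pos]
      nlinarith
    obtain ⟨a, ha⟩ := hS
    set S' := S \ insert a (N a) with hS'
    have hc : r * (d + 1) ≤ S'.card := by
      have h1 : (insert a (N a)).card ≤ d + 1 :=
        (Finset.card_insert_le _ _).trans (by have := hdeg a ha; omega)
      have h2 := Finset.le_card_sdiff (insert a (N a)) S
      rw [← hS'] at h2
      have : (r + 1) * (d + 1) ≤ S.card := hcard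
      have : r * (d+1) + (d+1) ≤ S.card := by nlinarith
      omega
    obtain ⟨B, hBS, hBcard, hBind⟩ := ih S'
      (fun b hb => hloop b (Finset.mem_sdiff.mp hb).1)
      (fun b hb => hdeg b (Finset.mem_sdiff.mp hb).1) hc
    have haB : a ∉ B := fun h => by
      have := Finset.mem_sdiff.mp (hBS h)
      exact this.2 (Finset.mem_insert_self _ _)
    refine ⟨insert a B, ?_, ?_, ?_⟩
    · intro b hb
      rcases Finset.mem_insert.mp hb with rfl | hb
      · exact ha
      · exact (Finset.mem_sdiff.mp (hBS hb)).1
    · rw [Finset.card_insert_of_notMem haB, hBcard]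
    · intro b hb c' hc' hcN
      have hnotin : ∀ z ∈ B, z ∉ insert a (N a) := fun z hz => (Finset.mem_sdiff.mp (hBS hz)).2
      rcases Finset.mem_insert.mp hb with hb1 | hb2
      · rcases Finset.mem_insert.mp hc' with hc1 | hc2
        · rw [hb1] at hcN; rw [hc1] at hcN; exact hloop a ha hcN
        · rw [hb1] at hcN; exact hnotin c' hc2 (Finset.mem_insert_of_mem hcN)
      · rcases Finset.mem_insert.mp hc' with hc1 | hc2
        · rw [hc1] at hcN
          exact hnotin b hb2 (Finset.mem_insert_of_mem ((hsym _ _).mp hcN))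
        · exact hBind b hb2 c' hc2 hcN

lemma head_flatten_mem {L : List (List ℕ)} {c : ℕ} (h : L.flatten.head? = some c) :
    ∃ p ∈ L, p.head? = some c := by
  rw [head?_flatten] at h
  exact exists_of_findSome?_eq_some h

lemma getLast_flatten_mem {L : List (List ℕ)} {c : ℕ} (h : L.flatten.getLast? = some c) :
    ∃ p ∈ L, p.getLast? = some c := by
  rw [getLast?_eq_head?_reverse, reverse_flatten] at h
  obtain ⟨q, hq, hq2⟩ := head_flatten_mem h
  rw [mem_reverse, mem_map] at hq
  obtain ⟨p, hp, rfl⟩ := hq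
  exact ⟨p, hp, by rwa [getLast?_eq_head?_reverse]⟩

lemma adj_self_head : ∀ (L : List (List ℕ)), (∀ p ∈ L, p.Nodup) →
    ∀ (P Q : List ℕ) (a : ℕ), L.flatten = P ++ a :: a :: Q → ∃ p ∈ L, p.head? = some a := by
  intro L
  induction L with
  | nil =>
    intro _ P Q a h
    exfalso
    have := congrArg List.length h
    simp at this
  | cons p L ih =>
    intro hnd P Q a h
    rw [flatten_cons] at h
    rcases append_eq_append_iff.mp h with ⟨t, h1, h2⟩ | ⟨t, h1, h2⟩
    · obtain ⟨q, hq, hq2⟩ := ih (fun q hq => hnd q (mem_cons_of_mem _ hq)) t Q a h2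
      exact ⟨q, mem_cons_of_mem _ hq, hq2⟩
    · cases t with
      | nil =>
        simp only [append_nil] at h1
        obtain ⟨q, hq, hq2⟩ := ih (fun q hq => hnd q (mem_cons_of_mem _ hq)) [] Q a (by simpa using h2.symm)
        exact ⟨q, mem_cons_of_mem _ hq, hq2⟩
      | cons x t' =>
        rw [cons_append] at h2
        injection h2 with e1 h2'
        subst e1
        cases t' with
        | nil =>
          simp only [nil_append] at h2'
          have : L.flatten.head? = some a := by rw [← h2']; rfl
          obtain ⟨q, hq, hq2⟩ := head_flatten_mem this
          exact ⟨q, mem_cons_of_mem _ hq, hq2⟩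
        | cons y t'' =>
          rw [cons_append] at h2'
          injection h2' with e2 h3
          subst e2
          exfalso
          have hsub : [a, a] <+ p := by
            rw [h1]
            refine Sublist.trans ?_ (sublist_append_right P _)
            exact (nil_sublist t'').cons₂ a |>.cons₂ a
          have := (hnd p (mem_cons_self)).sublist hsub
          simp at this

lemma exists_extend (f : ℕ → ℕ) (hf : Function.Injective f) (u : List ℕ) (x c : ℕ)
    (hx : x ∉ u) (hc : ∀ a ∈ u, f a ≠ c) :
    ∃ g : ℕ → ℕ, Function.Injective g ∧ g x = c ∧ ∀ a ∈ u, g a = f a := by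
  by_cases hr : c ∈ Set.range f
  · obtain ⟨y, rfl⟩ := hr
    refine ⟨f ∘ Equiv.swap x y, hf.comp (Equiv.swap x y).injective, by simp, ?_⟩
    intro a ha
    have hax : a ≠ x := fun h => hx (by rw [← h]; exact ha)
    have hay : a ≠ y := fun h => hc a ha (by rw [h])
    simp [Equiv.swap_apply_of_ne_of_ne hax hay]
  · refine ⟨Function.update f x c, ?_, Function.update_self _ _ _, ?_⟩
    · intro a b hab
      by_cases hax : a = x <;> by_cases hbx : b = x
      · rw [hax, hbx]
      · rw [hax] at hab ⊢
        rw [Function.update_self, Function.update_of_ne hbx] at hab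
        exact absurd ⟨b, hab.symm⟩ hr
      · rw [hbx] at hab ⊢
        rw [Function.update_self, Function.update_of_ne hax] at hab
        exact absurd ⟨a, hab⟩ hr
      · rw [Function.update_of_ne hax, Function.update_of_ne hbx] at hab
        exact hf hab
    · intro a ha
      exact Function.update_of_ne (fun h => hx (by rw [← h]; exact ha)) _ _

lemma key (u : List ℕ) (x i : ℕ) (hu : u ≠ []) (hi : i ≤ u.length) (hx : x ∉ u)
    (s r : ℕ) (hr : ∀ F, IsFormation r s F → Contains F u) :
    ∀ F, IsFormation (r * (2 * s + 1) + 2 * s) s F → Contains F (u.take i ++ x :: u.drop i) := by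
  rintro F ⟨A, ps, hA, hlen, hps, hF⟩
  have hFf : F = ps.flatten := hF
  set E : Finset ℕ := (ps.filterMap List.head?).toFinset ∪ (ps.filterMap List.getLast?).toFinset
    with hE
  have hEcard : E.card ≤ 2 * s := by
    refine (Finset.card_union_le _ _).trans ?_
    have h1 := toFinset_card_le (ps.filterMap List.head?)
    have h2 := toFinset_card_le (ps.filterMap List.getLast?)
    have h3 := length_filterMap_le List.head? ps
    have h4 := length_filterMap_le List.getLast? ps
    omega
  have hheadE : ∀ p ∈ ps, ∀ c : ℕ, p.head? = some c → c ∈ E := by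
    intro p hp c hc
    exact Finset.mem_union_left _ (List.mem_toFinset.mpr (List.mem_filterMap.mpr ⟨p, hp, hc⟩))
  have hlastE : ∀ p ∈ ps, ∀ c : ℕ, p.getLast? = some c → c ∈ E := by
    intro p hp c hc
    exact Finset.mem_union_right _ (List.mem_toFinset.mpr (List.mem_filterMap.mpr ⟨p, hp, hc⟩))
  have hloop : ∀ a ∈ A \ E, a ∉ nbr F a := by
    intro a ha hmem
    have hz : (a, a) ∈ F.zip F.tail := by rcases mem_nbr.mp hmem with h | h <;> exact h
    obtain ⟨P, Q, hPQ⟩ := (mem_zip_tail F a a).1 hz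
    obtain ⟨p, hp, hph⟩ := adj_self_head ps (fun p hp => (hps p hp).1) P Q a
      (by rw [← hFf]; exact hPQ)
    exact (Finset.mem_sdiff.mp ha).2 (hheadE p hp a hph)
  have hdeg : ∀ a ∈ A \ E, (nbr F a).card ≤ 2 * s := by
    intro a _
    refine (card_nbr_le F a).trans ?_
    have h1 := count_blocks_le ps (fun p hp => (hps p hp).1) a
    rw [← hFf] at h1
    omega
  have hcard : r * (2 * s + 1) ≤ (A \ E).card := by
    have h1 := Finset.le_card_sdiff E A
    omega
  obtain ⟨B, hBsub, hBcard, hBind⟩ := greedy (nbr F)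
    (fun a b => by rw [mem_nbr, mem_nbr, or_comm]) (2 * s) r (A \ E) hloop hdeg hcard
  have hBA : B ⊆ A := hBsub.trans Finset.sdiff_subset
  have hBE : ∀ b ∈ B, b ∉ E := fun b hb => (Finset.mem_sdiff.mp (hBsub hb)).2
  have hform : IsFormation r s (F.filter (· ∈ B)) := by
    refine ⟨B, ps.map (List.filter (· ∈ B)), hBcard, by simp [hlen], ?_, ?_⟩
    · intro q hq
      obtain ⟨p, hp, rfl⟩ := List.mem_map.mp hq
      refine ⟨(hps p hp).1.filter _, ?_⟩
      ext c
      simp only [List.mem_toFinset, List.mem_filter, decide_eq_true_eq]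
      constructor
      · rintro ⟨-, h⟩; exact h
      · intro hcB
        refine ⟨?_, hcB⟩
        have hcA : c ∈ A := hBA hcB
        rw [← (hps p hp).2] at hcA
        exact List.mem_toFinset.mp hcA
    · show F.filter _ = (ps.map (List.filter (· ∈ B))).flatten
      rw [hFf]
      exact filter_flatten
  obtain ⟨f, hfinj, hfsub⟩ := hr _ hform
  have himg : ∀ a ∈ u, f a ∈ B := by
    intro a ha
    have hmem : f a ∈ F.filter (· ∈ B) := hfsub.subset (List.mem_map_of_mem ha)
    simpa using (List.mem_filter.mp hmem).2
  have hfc : ∀ c : ℕ, c ∉ B → ∀ a ∈ u, f a ≠ c := fun c hc a ha h => hc (h ▸ himg a ha)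
  have hsubF : u.map f <+ F := hfsub.trans (filter_sublist)
  have humne : u.map f ≠ [] := by simpa using hu
  have hne : F ≠ [] := by
    intro h
    rw [h, sublist_nil] at hsubF
    exact humne hsubF
  by_cases hi0 : i = 0
  · -- v = x :: u; use the head of F
    subst hi0
    obtain ⟨c₀, F', rfl⟩ := exists_cons_of_ne_nil hne
    have hc₀E : c₀ ∈ E := by
      have hh : (ps.flatten).head? = some c₀ := by rw [← hFf]; rfl
      obtain ⟨p, hp, hph⟩ := head_flatten_mem hh
      exact hheadE p hp c₀ hph
    have hc₀B : c₀ ∉ B := fun h => hBE c₀ h hc₀E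
    have hsub' : u.map f <+ F' := by
      have hfe : (c₀ :: F').filter (· ∈ B) = F'.filter (· ∈ B) := by
        rw [filter_cons_of_neg]
        simpa using hc₀B
      rw [hfe] at hfsub
      exact hfsub.trans (filter_sublist)
    obtain ⟨g, hginj, hgx, hgu⟩ := exists_extend f hfinj u x c₀ hx (hfc c₀ hc₀B)
    refine ⟨g, hginj, ?_⟩
    simp only [take_zero, drop_zero, nil_append, map_cons]
    rw [hgx, map_congr_left hgu]
    exact hsub'.cons₂ c₀
  by_cases hil : i = u.length
  · -- v = u ++ [x]; use the last letter of F
    have hvl : u.take i ++ x :: u.drop i = u ++ [x] := by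
      rw [hil, take_length, drop_length]
    rw [hvl]
    have hgl : F.getLast? = some (F.getLast hne) := getLast?_eq_getLast hne
    set cl := F.getLast hne with hcl
    have hclE : cl ∈ E := by
      obtain ⟨p, hp, hph⟩ := getLast_flatten_mem (by rw [← hFf]; exact hgl)
      exact hlastE p hp cl hph
    have hclB : cl ∉ B := fun h => hBE cl h hclE
    have hdl : F.dropLast ++ [cl] = F := dropLast_append_getLast hne
    have hsub' : u.map f <+ F.dropLast := by
      have hfe : F.filter (· ∈ B) = F.dropLast.filter (· ∈ B) := by
        conv_lhs => rw [← hdl]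
        rw [filter_append, filter_cons_of_neg, filter_nil, append_nil]
        simpa using hclB
      rw [hfe] at hfsub
      exact hfsub.trans (filter_sublist)
    obtain ⟨g, hginj, hgx, hgu⟩ := exists_extend f hfinj u x cl hx (hfc cl hclB)
    refine ⟨g, hginj, ?_⟩
    rw [map_append, map_congr_left hgu]
    simp only [map_cons, map_nil, hgx]
    rw [← hdl]
    exact Sublist.append hsub' (Sublist.refl _)
  · -- interior case
    have hi1 : 0 < i := Nat.pos_of_ne_zero hi0
    have hi2 : i < u.length := lt_of_le_of_ne hi hil
    have hw1ne : (u.take i).map f ≠ [] := by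
      simp only [ne_eq, map_eq_nil_iff, take_eq_nil_iff]
      push_neg
      exact ⟨hi0, hu⟩
    have hw2ne : (u.drop i).map f ≠ [] := by
      simp only [ne_eq, map_eq_nil_iff, drop_eq_nil_iff]
      omega
    rcases eq_nil_or_concat ((u.take i).map f) with h | ⟨w₁', a, hw1⟩
    · exact absurd h hw1ne
    obtain ⟨b, w₂', hw2⟩ := exists_cons_of_ne_nil hw2ne
    have ha_mem : a ∈ B := by
      have : a ∈ (u.take i).map f := by rw [hw1]; simp [concat_eq_append]
      obtain ⟨a', ha', rfl⟩ := List.mem_map.mp this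
      exact himg a' (take_subset i u ha')
    have hb_mem : b ∈ B := by
      have : b ∈ (u.drop i).map f := by rw [hw2]; simp
      obtain ⟨b', hb', rfl⟩ := List.mem_map.mp this
      exact himg b' (drop_subset i u hb')
    have hdecomp : (w₁' ++ [a]) ++ (b :: w₂') <+ F := by
      rw [← concat_eq_append, ← hw1, ← hw2, ← map_append, take_append_drop]
      exact hsubF
    obtain ⟨L₁, L₂, hFL, hL₁, hL₂⟩ := append_sublist_iff.mp hdecomp
    obtain ⟨M₁, M₂, hLM, hM₁, hM₂⟩ := append_sublist_iff.mp hL₁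
    have haM₂ : a ∈ M₂ := singleton_sublist.mp hM₂
    obtain ⟨P', Q, hM₂e⟩ := append_of_mem haM₂
    obtain ⟨P₂, R, hL₂e, hbP, hw₂sub⟩ := cons_sublist_iff.mp hL₂
    obtain ⟨P₂', Q₂, hP₂e⟩ := append_of_mem hbP
    -- F = (M₁ ++ P') ++ a :: (Q ++ P₂') ++ b :: (Q₂ ++ R)
    have hFeq : F = (M₁ ++ P') ++ a :: ((Q ++ P₂') ++ b :: (Q₂ ++ R)) := by
      rw [hFL, hLM, hM₂e, hL₂e, hP₂e]
      simp [append_assoc]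
    have hw₁P : w₁' <+ M₁ ++ P' := hM₁.trans (sublist_append_left _ _)
    have hw₂Q : w₂' <+ Q₂ ++ R := hw₂sub.trans (sublist_append_right Q₂ R)
    by_cases hgap : ∀ c ∈ Q ++ P₂', c ∈ B
    · exfalso
      cases hQP : (Q ++ P₂') with
      | nil =>
        have hradj : (a, b) ∈ F.zip F.tail := by
          refine (mem_zip_tail F a b).2 ⟨M₁ ++ P', Q₂ ++ R, ?_⟩
          rw [hFeq, hQP]
          simp
        exact hBind a ha_mem b hb_mem (mem_nbr.mpr (Or.inl hradj))
      | cons c G' =>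
        have hcB : c ∈ B := hgap c (by rw [hQP]; exact mem_cons_self)
        have hradj : (a, c) ∈ F.zip F.tail := by
          refine (mem_zip_tail F a c).2 ⟨M₁ ++ P', G' ++ b :: (Q₂ ++ R), ?_⟩
          rw [hFeq, hQP]
          simp
        exact hBind a ha_mem c hcB (mem_nbr.mpr (Or.inl hradj))
    · push_neg at hgap
      obtain ⟨c, hcg, hcB⟩ := hgap
      obtain ⟨G₁, G₂, hGe⟩ := append_of_mem hcg
      obtain ⟨g, hginj, hgx, hgu⟩ := exists_extend f hfinj u x c hx (hfc c hcB)
      refine ⟨g, hginj, ?_⟩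
      have hmg1 : (u.take i).map g = w₁' ++ [a] := by
        rw [map_congr_left (fun a' ha' => hgu a' (take_subset i u ha')), hw1, concat_eq_append]
      have hmg2 : (u.drop i).map g = b :: w₂' := by
        rw [map_congr_left (fun a' ha' => hgu a' (drop_subset i u ha')), hw2]
      rw [map_append, map_cons, hmg1, hmg2, hgx]
      have s1 : b :: w₂' <+ b :: (Q₂ ++ R) := hw₂Q.cons₂ b
      have s2 : c :: b :: w₂' <+ c :: (G₂ ++ (b :: (Q₂ ++ R))) :=
        (s1.trans (sublist_append_right G₂ _)).cons₂ c
      have s3 : c :: b :: w₂' <+ G₁ ++ (c :: (G₂ ++ (b :: (Q₂ ++ R)))) :=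
        s2.trans (sublist_append_right G₁ _)
      have s4 := (s3.cons₂ a)
      have s5 := Sublist.append hw₁P s4
      have hFeq2 : F = (M₁ ++ P') ++ (a :: (G₁ ++ (c :: (G₂ ++ (b :: (Q₂ ++ R)))))) := by
        rw [hFeq, hGe]
        simp [append_assoc]
      rw [hFeq2]
      have hsh : (w₁' ++ [a]) ++ c :: b :: w₂' = w₁' ++ (a :: (c :: (b :: w₂'))) := by
        simp
      rw [hsh]
      exact s5

theorem stmt5 (u : List ℕ) (x i : ℕ) (hu : u ≠ []) (hi : i ≤ u.length) (hx : x ∉ u) :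
    fw u = fw (u.take i ++ x :: u.drop i) := by
  have hsets : {s | ∃ r, ∀ F, IsFormation r s F → Contains F u}
      = {s | ∃ r, ∀ F, IsFormation r s F → Contains F (u.take i ++ x :: u.drop i)} := by
    ext s
    simp only [Set.mem_setOf_eq]
    constructor
    · rintro ⟨r, hr⟩
      exact ⟨r * (2 * s + 1) + 2 * s, key u x i hu hi hx s r hr⟩
    · rintro ⟨r, hr⟩
      refine ⟨r, fun F hF => ?_⟩
      obtain ⟨f, hinj, hsub⟩ := hr F hF
      refine ⟨f, hinj, ?_⟩
      have husub : u.Sublist (u.take i ++ x :: u.drop i) := by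
        conv_lhs => rw [← List.take_append_drop i u]
        exact (List.sublist_cons_self x _).append_left _
      exact (husub.map f).trans hsub
  unfold fw
  rw [hsets]
end

section
/- Let c ≥ 2, let u = I_c^{e_1} D_c^{e_2} I_c^{e_3} ... L_c^{e_n} with all e_i > 0 (L = I if n is odd, D if n is even), and let k = e_1 + ... + e_n. Then for every index m, fw(u) ≤ c(k - e_m) + 2 e_m - 1. -/
def esB : ℕ → ℕ → ℕ
  | 0, _ => 0
  | _+1, 0 => 0
  | a+1, b+1 => esB a (b+1) + esB (a+1) b + 1

lemma es_aux : ∀ (n a b : ℕ), a + b ≤ n → ∀ M : List ℕ, M.Nodup → esB a b ≤ M.length →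
    ∃ L : List ℕ, L.Sublist M ∧ ((L.length = a ∧ L.Pairwise (· < ·)) ∨ (L.length = b ∧ L.Pairwise (· > ·))) := by
  intro n
  induction n with
  | zero =>
    intro a b hab M _ _
    have : a = 0 := by omega
    subst this
    exact ⟨[], List.nil_sublist M, Or.inl ⟨rfl, List.Pairwise.nil⟩⟩
  | succ n ih =>
    intro a b hab M hnd hlen
    match a, b with
    | 0, b => exact ⟨[], List.nil_sublist M, Or.inl ⟨rfl, List.Pairwise.nil⟩⟩
    | a+1, 0 => exact ⟨[], List.nil_sublist M, Or.inr ⟨rfl, List.Pairwise.nil⟩⟩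
    | a+1, b+1 =>
      have hesb : esB (a+1) (b+1) = esB a (b+1) + esB (a+1) b + 1 := by simp [esB]
      have hM : 0 < M.length := by omega
      match M, hM with
      | x :: T, _ =>
      have hndT : T.Nodup := hnd.of_cons
      have hxT : x ∉ T := by simp [List.nodup_cons] at hnd; exact hnd.1
      set P := T.filter (fun y => decide (x < y)) with hP
      set Q := T.filter (fun y => decide (y ≤ x)) with hQ
      have hPQ : P.length + Q.length = T.length := by
        rw [hP, hQ]
        simpa [← List.countP_eq_length_filter] using
          (List.length_eq_countP_add_countP (fun y => decide (x < y)) (l := T)).symm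
      have hlen' : esB (a+1) (b+1) ≤ T.length + 1 := by simpa using hlen
      by_cases hcase : esB a (b+1) ≤ P.length
      · obtain ⟨L, hLs, hL⟩ := ih a (b+1) (by omega) P (hndT.sublist (List.filter_sublist (l := T))) hcase
        have hLT : L.Sublist T := hLs.trans (List.filter_sublist (l := T))
        rcases hL with ⟨h1, h2⟩ | ⟨h1, h2⟩
        · refine ⟨x :: L, (hLT).cons₂ x, Or.inl ⟨by simp [h1], ?_⟩⟩
          rw [List.pairwise_cons]
          refine ⟨fun b hb => ?_, h2⟩
          have := List.of_mem_filter (hLs.subset hb)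
          simpa using this
        · exact ⟨L, hLT.trans (List.sublist_cons_self x T), Or.inr ⟨h1, h2⟩⟩
      · have hQ2 : esB (a+1) b ≤ Q.length := by omega
        obtain ⟨L, hLs, hL⟩ := ih (a+1) b (by omega) Q (hndT.sublist (List.filter_sublist (l := T))) hQ2
        have hLT : L.Sublist T := hLs.trans (List.filter_sublist (l := T))
        rcases hL with ⟨h1, h2⟩ | ⟨h1, h2⟩
        · exact ⟨L, hLT.trans (List.sublist_cons_self x T), Or.inl ⟨h1, h2⟩⟩
        · refine ⟨x :: L, (hLT).cons₂ x, Or.inr ⟨by simp [h1], ?_⟩⟩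
          rw [List.pairwise_cons]
          refine ⟨fun b hb => ?_, h2⟩
          have hmem := hLs.subset hb
          have h3 := List.of_mem_filter hmem
          have h4 : b ∈ T := (List.filter_sublist (l := T)).subset hmem
          have h5 : b ≠ x := fun h => hxT (h ▸ h4)
          simp at h3
          omega


-- v is a sublist of M if its elements lie in M and their indices are increasing
lemma sublist_of_indexOf_pairwise : ∀ (M v : List ℕ), (∀ x ∈ v, x ∈ M) →
    v.Pairwise (fun a b => M.idxOf a < M.idxOf b) → v.Sublist M := by
  intro M
  induction M with
  | nil =>
    intro v hmem _
    cases v with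
    | nil => exact List.nil_sublist _
    | cons a v => exact absurd (hmem a (by simp)) (by simp)
  | cons m M ih =>
    intro v hmem hpw
    cases v with
    | nil => exact List.nil_sublist _
    | cons a v =>
      by_cases ha : a = m
      · subst ha
        refine List.Sublist.cons₂ a (ih v ?_ ?_)
        · intro x hx
          have hxM : x ∈ a :: M := hmem x (by simp [hx])
          have hlt : (a :: M).idxOf a < (a :: M).idxOf x :=
            (List.pairwise_cons.1 hpw).1 x hx
          have hne : x ≠ a := by
            intro h; subst h; exact lt_irrefl _ hlt
          rcases List.mem_cons.1 hxM with h | h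
          · exact absurd h hne
          · exact h
        · have hpw' := (List.pairwise_cons.1 hpw).2
          refine hpw'.imp_of_mem ?_
          intro x y hx hy hlt
          have hxm : x ≠ a := by
            have h1 : (a :: M).idxOf a < (a :: M).idxOf x :=
              (List.pairwise_cons.1 hpw).1 x hx
            intro h; subst h; exact lt_irrefl _ h1
          have hym : y ≠ a := by
            have h1 : (a :: M).idxOf a < (a :: M).idxOf y :=
              (List.pairwise_cons.1 hpw).1 y (by simp [hy])
            intro h; subst h; exact lt_irrefl _ h1
          rw [List.idxOf_cons_ne _ hxm.symm, List.idxOf_cons_ne _ hym.symm] at hlt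
          omega
      · -- a ≠ m, so everything in a :: v is ≠ m
        have hne : ∀ x ∈ a :: v, x ≠ m := by
          intro x hx
          rcases List.mem_cons.1 hx with h | h
          · subst h; exact ha
          · have h1 : (m :: M).idxOf a < (m :: M).idxOf x :=
              (List.pairwise_cons.1 hpw).1 x h
            have h2 : (m :: M).idxOf a ≠ 0 := by
              rw [List.idxOf_cons_ne _ (Ne.symm ha)]; simp
            intro hxm; subst hxm
            simp [List.idxOf_cons_self] at h1
          
        refine List.Sublist.cons m (ih (a :: v) ?_ ?_)
        · intro x hx
          have hxM := hmem x hx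
          rcases List.mem_cons.1 hxM with h | h
          · exact absurd h (hne x hx)
          · exact h
        · refine hpw.imp_of_mem ?_
          intro x y hx hy hlt
          rw [List.idxOf_cons_ne _ (Ne.symm (hne x hx)), List.idxOf_cons_ne _ (Ne.symm (hne y hy))] at hlt
          omega

-- filtering a nodup list by membership in a sublist recovers the sublist
lemma filter_mem_of_sublist {L W : List ℕ} (h : L.Sublist W) : W.Nodup → W.filter (· ∈ L) = L := by
  induction h with
  | slnil => intro _; rfl
  | @cons L' W' w h ih =>
    intro hnd
    have hw : w ∉ L' := fun hm => (List.nodup_cons.1 hnd).1 (h.subset hm)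
    rw [List.filter_cons]
    rw [if_neg (by simpa using hw)]
    exact ih hnd.of_cons
  | @cons_cons L' W' w h ih =>
    intro hnd
    have hwW : w ∉ W' := (List.nodup_cons.1 hnd).1
    rw [List.filter_cons]
    rw [if_pos (by simp)]
    congr 1
    rw [List.filter_congr (q := (· ∈ L')), ih hnd.of_cons]
    intro x hx
    have : x ≠ w := fun h => hwW (h ▸ hx)
    simp [this]


lemma selectMono (t : ℕ) (M q : List ℕ) (hMnd : M.Nodup) (hqnd : q.Nodup)
    (hsub : ∀ x ∈ M, x ∈ q) (hlen : esB t t ≤ M.length) :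
    ∃ M' : List ℕ, M'.Sublist M ∧ M'.length = t ∧
      (q.filter (· ∈ M') = M' ∨ q.filter (· ∈ M') = M'.reverse) := by
  classical
  set W := q.filter (· ∈ M) with hW
  have hWnd : W.Nodup := hqnd.filter _
  have hWM : ∀ x ∈ W, x ∈ M := by
    intro x hx
    have := List.of_mem_filter hx
    simpa using this
  have hMW : ∀ x ∈ M, x ∈ W := by
    intro x hx
    exact List.mem_filter.2 ⟨hsub x hx, by simpa using hx⟩
  have hlenW : M.length ≤ W.length :=
    ((hMnd.subperm (fun x hx => hMW x hx))).length_le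
  set S := W.map (fun x => M.idxOf x) with hS
  have hSnd : S.Nodup := by
    refine List.Nodup.map_on ?_ hWnd
    intro x hx y hy hxy
    exact (List.idxOf_inj (hWM x hx)).1 hxy
  have hSlen : esB t t ≤ S.length := by
    rw [hS, List.length_map]; omega
  obtain ⟨Lw, hLw, hsort⟩ := es_aux (t + t) t t le_rfl S hSnd hSlen
  obtain ⟨v, hvW, hveq⟩ := List.sublist_map_iff.1 hLw
  have hvM : ∀ x ∈ v, x ∈ M := fun x hx => hWM x (hvW.subset hx)
  have hfilter_v : q.filter (· ∈ v) = v := by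
    have h1 : q.filter (· ∈ v) = W.filter (· ∈ v) := by
      rw [hW, List.filter_filter]
      apply List.filter_congr
      intro x _
      by_cases hx : x ∈ v
      · simp [hx, hvM x hx]
      · simp [hx]
    rw [h1, filter_mem_of_sublist hvW hWnd]
  have hvlen : v.length = Lw.length := by rw [hveq, List.length_map]
  rcases hsort with ⟨h1, h2⟩ | ⟨h1, h2⟩
  · -- increasing: v itself is a sublist of M
    refine ⟨v, ?_, by omega, Or.inl hfilter_v⟩
    apply sublist_of_indexOf_pairwise M v hvM
    have := (List.pairwise_map.1 (hveq ▸ h2 : (v.map (fun x => M.idxOf x)).Pairwise (· < ·)))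
    exact this
  · -- decreasing: v.reverse is a sublist of M
    have hpw : v.Pairwise (fun a b => M.idxOf b < M.idxOf a) :=
      List.pairwise_map.1 (hveq ▸ h2 : (v.map (fun x => M.idxOf x)).Pairwise (· > ·))
    refine ⟨v.reverse, ?_, by simp; omega, ?_⟩
    · apply sublist_of_indexOf_pairwise M v.reverse (fun x hx => hvM x (List.mem_reverse.1 hx))
      exact List.pairwise_reverse.2 hpw
    · right
      have h3 : q.filter (· ∈ v.reverse) = q.filter (· ∈ v) := by
        apply List.filter_congr
        intro x _
        simp
      rw [h3, hfilter_v, List.reverse_reverse]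

def ramBound (c : ℕ) : ℕ → ℕ
  | 0 => c
  | s+1 => esB (ramBound c s) (ramBound c s)

lemma ramsey (c : ℕ) : ∀ (qs : List (List ℕ)) (M : List ℕ), M.Nodup →
    ramBound c qs.length ≤ M.length → (∀ q ∈ qs, q.Nodup ∧ ∀ x ∈ M, x ∈ q) →
    ∃ L : List ℕ, L.Sublist M ∧ L.length = c ∧
      ∀ q ∈ qs, q.filter (· ∈ L) = L ∨ q.filter (· ∈ L) = L.reverse := by
  intro qs
  induction qs with
  | nil =>
    intro M hnd hlen _
    refine ⟨M.take c, List.take_sublist c M, ?_, by simp⟩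
    rw [List.length_take]
    simp [ramBound] at hlen
    omega
  | cons q qs ih =>
    intro M hnd hlen hq
    have hlen' : esB (ramBound c qs.length) (ramBound c qs.length) ≤ M.length := by
      simpa [ramBound] using hlen
    obtain ⟨M', hM'sub, hM'len, hM'or⟩ :=
      selectMono (ramBound c qs.length) M q hnd (hq q (by simp)).1
        (fun x hx => (hq q (by simp)).2 x hx) hlen'
    have hM'nd : M'.Nodup := hnd.sublist hM'sub
    obtain ⟨L, hLsub, hLlen, hLor⟩ := ih M' hM'nd (le_of_eq hM'len.symm)
      (fun q' hq' => ⟨(hq q' (by simp [hq'])).1,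
        fun x hx => (hq q' (by simp [hq'])).2 x (hM'sub.subset hx)⟩)
    refine ⟨L, hLsub.trans hM'sub, hLlen, ?_⟩
    intro q' hq'
    rcases List.mem_cons.1 hq' with h | h
    · subst h
      have hstep : q'.filter (· ∈ L) = (q'.filter (· ∈ M')).filter (· ∈ L) := by
        rw [List.filter_filter]
        apply List.filter_congr
        intro x _
        by_cases hx : x ∈ L
        · simp [hx, hLsub.subset hx]
        · simp [hx]
      rcases hM'or with hor | hor
      · left; rw [hstep, hor, filter_mem_of_sublist hLsub hM'nd]
      · right
        rw [hstep, hor, List.filter_reverse, filter_mem_of_sublist hLsub hM'nd]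
    · exact hLor q' h


lemma join_cons' (q : List ℕ) (qs : List (List ℕ)) : (q :: qs).flatten = q ++ qs.flatten := rfl

def patL (c : ℕ) (b : Bool) : List ℕ := if b then Ic c else Dc c

def altB (c : ℕ) : Bool → List ℕ → List ℕ
  | _, [] => []
  | b, a :: e => rep (patL c b) a ++ altB c (!b) e

lemma rep_zero (l : List ℕ) : rep l 0 = [] := by simp [rep]

lemma rep_succ (l : List ℕ) (k : ℕ) : rep l (k+1) = l ++ rep l k := by
  simp [rep, List.replicate_succ]

lemma length_rep (l : List ℕ) (k : ℕ) : (rep l k).length = k * l.length := by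
  induction k with
  | zero => simp [rep_zero]
  | succ k ih => rw [rep_succ, List.length_append, ih]; ring

lemma length_Ic (c : ℕ) : (Ic c).length = c := by simp [Ic]

lemma length_patL (c : ℕ) (b : Bool) : (patL c b).length = c := by
  cases b <;> simp [patL, Ic, Dc]

lemma length_altB (c : ℕ) : ∀ (b : Bool) (e : List ℕ), (altB c b e).length = c * e.sum := by
  intro b e
  induction e generalizing b with
  | nil => simp [altB]
  | cons a e ih =>
    simp only [altB, List.length_append, length_rep, length_patL, ih, List.sum_cons]
    ring

lemma mem_Ic {x c : ℕ} : x ∈ Ic c ↔ 1 ≤ x ∧ x ≤ c := by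
  rw [Ic, List.mem_range'_1]; omega

lemma mem_rep {x : ℕ} {l : List ℕ} {k : ℕ} (h : x ∈ rep l k) : x ∈ l := by
  induction k with
  | zero => simp [rep_zero] at h
  | succ k ih =>
    rw [rep_succ, List.mem_append] at h
    rcases h with h | h
    · exact h
    · exact ih h

lemma mem_patL {x c : ℕ} {b : Bool} (h : x ∈ patL c b) : 1 ≤ x ∧ x ≤ c := by
  cases b <;> simp [patL, Dc] at h <;> exact mem_Ic.1 (by simpa using h)

lemma mem_altB {x c : ℕ} : ∀ {b : Bool} {e : List ℕ}, x ∈ altB c b e → 1 ≤ x ∧ x ≤ c := by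
  intro b e
  induction e generalizing b with
  | nil => intro h; simp [altB] at h
  | cons a e ih =>
    intro h
    rcases List.mem_append.1 h with h | h
    · exact mem_patL (mem_rep h)
    · exact ih h

lemma map_rep (f : ℕ → ℕ) (l : List ℕ) (k : ℕ) : (rep l k).map f = rep (l.map f) k := by
  induction k with
  | zero => rfl
  | succ k ih => rw [rep_succ, rep_succ, List.map_append, ih]

lemma one_per_block : ∀ (qs : List (List ℕ)) (v : List ℕ), v.length ≤ qs.length →
    (∀ x ∈ v, ∀ q ∈ qs, x ∈ q) → v.Sublist qs.flatten := by
  intro qs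
  induction qs with
  | nil =>
    intro v hlen _
    have : v = [] := List.eq_nil_of_length_eq_zero (by simpa using hlen)
    simp [this]
  | cons q qs ih =>
    intro v hlen hmem
    cases v with
    | nil => exact List.nil_sublist _
    | cons x v =>
      rw [join_cons']
      show ([x] ++ v).Sublist (q ++ qs.flatten)
      refine List.Sublist.append ?_ (ih v (by simpa using hlen) ?_)
      · exact List.singleton_sublist.2 (hmem x (by simp) q (by simp))
      · intro y hy q' hq'
        exact hmem y (by simp [hy]) q' (by simp [hq'])

lemma rep_blocks : ∀ (qs : List (List ℕ)) (v : List ℕ) (p : List ℕ → Bool) (n : ℕ),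
    n ≤ qs.countP p → (∀ q ∈ qs, p q = true → v.Sublist q) → (rep v n).Sublist qs.flatten := by
  intro qs
  induction qs with
  | nil =>
    intro v p n hn _
    simp [List.countP_nil] at hn
    simp [hn, rep_zero]
  | cons q qs ih =>
    intro v p n hn hv
    rw [join_cons']
    by_cases hp : p q = true
    · cases n with
      | zero => exact List.nil_sublist _
      | succ n =>
        rw [rep_succ]
        refine List.Sublist.append (hv q (by simp) hp) (ih v p n ?_ ?_)
        · rw [List.countP_cons_of_pos hp] at hn; omega
        · intro q' hq' h; exact hv q' (by simp [hq']) h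
    · refine (ih v p n ?_ ?_).trans (List.sublist_append_right q qs.flatten)
      · rwa [List.countP_cons_of_neg (by simpa using hp)] at hn
      · intro q' hq' h; exact hv q' (by simp [hq']) h

lemma altB_append (c : ℕ) : ∀ (xs ys : List ℕ) (b : Bool),
    altB c b (xs ++ ys) = altB c b xs ++ altB c (if xs.length % 2 = 0 then b else !b) ys := by
  intro xs
  induction xs with
  | nil => intro ys b; simp [altB]
  | cons a xs ih =>
    intro ys b
    show rep (patL c b) a ++ altB c (!b) (xs ++ ys) = _
    rw [ih ys (!b)]
    show _ = (rep (patL c b) a ++ altB c (!b) xs) ++ _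
    rw [List.append_assoc]
    congr 2
    rcases Nat.mod_two_eq_zero_or_one xs.length with h | h <;>
      simp [h, List.length_cons, Nat.add_mod, Bool.not_not]

lemma altBlocks_eq_altB (c : ℕ) : ∀ (e : List ℕ) (i : ℕ),
    (((List.range' i e.length).zip e).map (fun p => rep (if p.1 % 2 = 0 then Ic c else Dc c) p.2)).flatten
      = altB c (decide (i % 2 = 0)) e := by
  intro e
  induction e with
  | nil => intro i; simp [altB]
  | cons a e ih =>
    intro i
    rw [List.length_cons, List.range'_succ, List.zip_cons_cons, List.map_cons, join_cons', ih (i+1)]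
    show rep (if i % 2 = 0 then Ic c else Dc c) a ++ _ = rep (patL c (decide (i % 2 = 0))) a ++ _
    have h1 : (if i % 2 = 0 then Ic c else Dc c) = patL c (decide (i % 2 = 0)) := by
      by_cases h : i % 2 = 0 <;> simp [h, patL]
    have h2 : (decide ((i+1) % 2 = 0)) = !(decide (i % 2 = 0)) := by
      rcases Nat.mod_two_eq_zero_or_one i with h | h <;> simp [h, Nat.add_mod]
    rw [h1, h2]


def emb (L : List ℕ) (c : ℕ) (σ : Bool) (x : ℕ) : ℕ :=
  if 1 ≤ x ∧ x ≤ c then L.getD (if σ then x - 1 else c - x) 0 else x + (L.sum + 1)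

lemma emb_small {L : List ℕ} {c : ℕ} (hL : L.length = c) (σ : Bool) {x : ℕ}
    (h1 : 1 ≤ x) (h2 : x ≤ c) :
    ∃ i : ℕ, ∃ hi : i < L.length, emb L c σ x = L[i] ∧ i = (if σ then x - 1 else c - x) := by
  have hi : (if σ then x - 1 else c - x) < L.length := by
    cases σ <;> simp [hL] <;> omega
  refine ⟨_, hi, ?_, rfl⟩
  rw [emb, if_pos ⟨h1, h2⟩, List.getD_eq_getElem L 0 hi]

lemma emb_mem {L : List ℕ} {c : ℕ} (hL : L.length = c) (σ : Bool) {x : ℕ}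
    (h1 : 1 ≤ x) (h2 : x ≤ c) : emb L c σ x ∈ L := by
  obtain ⟨i, hi, heq, _⟩ := emb_small hL σ h1 h2
  rw [heq]; exact List.getElem_mem hi

lemma lt_of_mem_sum {L : List ℕ} {y : ℕ} (hy : y ∈ L) : y < L.sum + 1 := by
  have := List.single_le_sum (fun x _ => Nat.zero_le x) y hy
  omega

lemma emb_inj {L : List ℕ} {c : ℕ} (hnd : L.Nodup) (hL : L.length = c) (σ : Bool) :
    Function.Injective (emb L c σ) := by
  intro x y hxy
  by_cases hx : 1 ≤ x ∧ x ≤ c <;> by_cases hy : 1 ≤ y ∧ y ≤ c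
  · obtain ⟨i, hi, heqi, hieq⟩ := emb_small hL σ hx.1 hx.2
    obtain ⟨j, hj, heqj, hjeq⟩ := emb_small hL σ hy.1 hy.2
    rw [heqi, heqj] at hxy
    have := (hnd.getElem_inj_iff).1 hxy
    subst hieq; subst hjeq
    cases σ <;> simp at this <;> omega
  · exfalso
    have h1 : emb L c σ x ∈ L := emb_mem hL σ hx.1 hx.2
    have h2 : emb L c σ y = y + (L.sum + 1) := by rw [emb, if_neg hy]
    have := lt_of_mem_sum h1
    omega
  · exfalso
    have h1 : emb L c σ y ∈ L := emb_mem hL σ hy.1 hy.2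
    have h2 : emb L c σ x = x + (L.sum + 1) := by rw [emb, if_neg hx]
    have := lt_of_mem_sum h1
    omega
  · have h1 : emb L c σ x = x + (L.sum + 1) := by rw [emb, if_neg hx]
    have h2 : emb L c σ y = y + (L.sum + 1) := by rw [emb, if_neg hy]
    omega

lemma map_emb_Ic {L : List ℕ} {c : ℕ} (hL : L.length = c) (σ : Bool) :
    (Ic c).map (emb L c σ) = if σ then L else L.reverse := by
  apply List.ext_getElem
  · cases σ <;> simp [Ic, hL]
  · intro n h1 h2
    have hn : n < c := by simpa [Ic] using h1
    rw [List.getElem_map]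
    have h1' : n < (Ic c).length := by simpa using h1
    have hIc : (Ic c)[n]'h1' = 1 + n := by
      simp [Ic, List.getElem_range']
    rw [hIc]
    obtain ⟨i, hi, heq, hieq⟩ := emb_small (x := 1 + n) hL σ (by omega) (by omega)
    rw [heq]
    cases σ with
    | false =>
      rw [if_neg (show ¬(false = true) by simp)] at hieq
      simp only [Bool.false_eq_true, if_false]
      rw [List.getElem_reverse]
      congr 1
      omega
    | true =>
      rw [if_pos rfl] at hieq
      simp only [if_true]
      congr 1
      omega

lemma map_emb_patL {L : List ℕ} {c : ℕ} (hL : L.length = c) (σ b : Bool) :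
    (patL c b).map (emb L c σ) = if σ = b then L else L.reverse := by
  cases b with
  | true => rw [patL, if_pos rfl, map_emb_Ic hL]
  | false =>
    rw [patL, if_neg (by simp), Dc, List.map_reverse, map_emb_Ic hL]
    cases σ <;> simp


lemma join_append' (xs ys : List (List ℕ)) : (xs ++ ys).flatten = xs.flatten ++ ys.flatten :=
  List.flatten_append

lemma hLq_of_orient {L : List ℕ} {qs : List (List ℕ)}
    (hq : ∀ q ∈ qs, q.filter (· ∈ L) = L ∨ q.filter (· ∈ L) = L.reverse) :
    ∀ q ∈ qs, ∀ x ∈ L, x ∈ q := by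
  intro q hq' x hx
  rcases hq q hq' with h | h
  · rw [← h] at hx
    exact List.mem_of_mem_filter hx
  · rw [← List.mem_reverse, ← h] at hx
    exact List.mem_of_mem_filter hx

lemma majority (p1 p2 : List ℕ → Bool) (l : List (List ℕ))
    (h : ∀ x ∈ l, p1 x = true ∨ p2 x = true) :
    l.length ≤ l.countP p1 + l.countP p2 := by
  induction l with
  | nil => simp
  | cons a l ih =>
    have ha := h a (by simp)
    have hl := ih (fun x hx => h x (by simp [hx]))
    rcases ha with ha | ha
    · rw [List.countP_cons_of_pos ha, List.countP_cons]
      simp only [List.length_cons]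
      omega
    · rw [List.countP_cons_of_pos ha, List.countP_cons]
      simp only [List.length_cons]
      omega

theorem main_embed (c : ℕ) (L : List ℕ) (hLnd : L.Nodup) (hLc : L.length = c)
    (e : List ℕ) (m : ℕ) (hm : m < e.length) (hem : 0 < e.get ⟨m, hm⟩)
    (qs : List (List ℕ))
    (hq : ∀ q ∈ qs, q.filter (· ∈ L) = L ∨ q.filter (· ∈ L) = L.reverse)
    (hlen : c * ((e.take m).sum + (e.drop (m+1)).sum) + (2 * e.get ⟨m, hm⟩ - 1) ≤ qs.length) :
    ∃ σ : Bool, ((altB c true e).map (emb L c σ)).Sublist qs.flatten := by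
  classical
  set em := e.get ⟨m, hm⟩ with hemdef
  set t₁ := e.take m with ht₁
  set t₂ := e.drop (m+1) with ht₂
  have hdec : e = t₁ ++ em :: t₂ := by
    conv_lhs => rw [← List.take_append_drop m e]
    rw [ht₁, ht₂, hemdef]
    congr 1
    rw [List.drop_eq_getElem_cons hm]
    simp [List.get_eq_getElem]
  set b' : Bool := if t₁.length % 2 = 0 then true else !true with hb'
  set n₁ := c * t₁.sum with hn₁
  set w := 2 * em - 1 with hw
  set qs₁ := qs.take n₁ with hqs₁
  set qs₂ := (qs.drop n₁).take w with hqs₂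
  set qs₃ := (qs.drop n₁).drop w with hqs₃
  have hlen' : c * t₁.sum + c * t₂.sum + (2 * em - 1) ≤ qs.length := by
    rw [Nat.mul_add] at hlen; omega
  have hqsdec : qs = qs₁ ++ (qs₂ ++ qs₃) := by
    rw [hqs₁, hqs₂, hqs₃, List.take_append_drop, List.take_append_drop]
  have hlen₁ : qs₁.length = n₁ := by
    rw [hqs₁, List.length_take]; omega
  have hlen₂ : qs₂.length = w := by
    rw [hqs₂, List.length_take, List.length_drop]; omega
  have hlen₃ : c * t₂.sum ≤ qs₃.length := by
    rw [hqs₃, List.length_drop, List.length_drop]; omega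
  have hsub₂ : ∀ q ∈ qs₂, q ∈ qs :=
    fun q h => ((List.take_sublist _ _).trans (List.drop_sublist _ _)).subset h
  have hLq := hLq_of_orient hq
  -- majority orientation in the middle window
  have hVσ : ∃ (σ : Bool) (V : List ℕ), (patL c b').map (emb L c σ) = V ∧
      em ≤ qs₂.countP (fun q => decide (q.filter (· ∈ L) = V)) := by
    by_cases hc1 : em ≤ qs₂.countP (fun q => decide (q.filter (· ∈ L) = L))
    · refine ⟨b', L, ?_, hc1⟩
      rw [map_emb_patL hLc]
      simp
    · refine ⟨!b', L.reverse, ?_, ?_⟩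
      · rw [map_emb_patL hLc]
        cases b' <;> simp
      · have hmaj := majority (fun q => decide (q.filter (· ∈ L) = L))
          (fun q => decide (q.filter (· ∈ L) = L.reverse)) qs₂ ?_
        · have hql : qs₂.length = w := hlen₂
          rw [hw] at hql
          omega
        · intro x hx
          rcases hq x (hsub₂ x hx) with h | h <;> simp [h]
  obtain ⟨σ, V, Hpat, hcount⟩ := hVσ
  set f := emb L c σ with hf
  refine ⟨σ, ?_⟩
  show ((altB c true e).map f).Sublist qs.flatten
  -- the three pieces
  have h₁ : ((altB c true t₁).map f).Sublist qs₁.flatten := by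
    apply one_per_block
    · rw [List.length_map, length_altB, hlen₁]
    · intro x hx q hq'
      rw [List.mem_map] at hx
      obtain ⟨y, hy, hxy⟩ := hx
      have hb := mem_altB hy
      exact hLq q ((List.take_sublist _ _).subset hq') _ (hxy ▸ emb_mem hLc σ hb.1 hb.2)
  have h₂ : ((rep (patL c b') em).map f).Sublist qs₂.flatten := by
    rw [map_rep, Hpat]
    apply rep_blocks qs₂ _ (fun q => decide (q.filter (· ∈ L) = V)) em hcount
    intro q _ hpq
    have : q.filter (· ∈ L) = V := by simpa using hpq
    rw [← this]
    exact List.filter_sublist (l := q)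
  have h₃ : ((altB c (!b') t₂).map f).Sublist qs₃.flatten := by
    apply one_per_block
    · rw [List.length_map, length_altB]; omega
    · intro x hx q hq'
      rw [List.mem_map] at hx
      obtain ⟨y, hy, hxy⟩ := hx
      have hb := mem_altB hy
      refine hLq q ?_ _ (hxy ▸ emb_mem hLc σ hb.1 hb.2)
      exact ((List.drop_sublist _ _).trans (List.drop_sublist _ _)).subset hq'
  -- assemble
  have hu : (altB c true e).map f
      = (altB c true t₁).map f ++ ((rep (patL c b') em).map f ++ (altB c (!b') t₂).map f) := by
    rw [← List.map_append, ← List.map_append]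
    congr 1
    rw [hdec, altB_append, ← hb']
    rfl
  rw [hu, hqsdec, join_append', join_append']
  exact List.Sublist.append h₁ (List.Sublist.append h₂ h₃)


lemma altBlocks_eq (c : ℕ) (e : List ℕ) : altBlocks c e = altB c true e := by
  have h := altBlocks_eq_altB c e 0
  rw [altBlocks]
  rw [List.range_eq_range']
  simpa using h


theorem stmt9 (c : ℕ) (hc : 2 ≤ c) (e : List ℕ) (he : ∀ x ∈ e, 0 < x)
    (m : ℕ) (hm : m < e.length) :
    fw (altBlocks c e) ≤ c * (e.sum - e.get ⟨m, hm⟩) + 2 * e.get ⟨m, hm⟩ - 1 := by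
  classical
  set em := e.get ⟨m, hm⟩ with hemdef
  have hem : 0 < em := he _ (List.get_mem e ⟨m, hm⟩)
  set s := c * (e.sum - em) + 2 * em - 1 with hs
  apply Nat.sInf_le
  refine ⟨ramBound c s, ?_⟩
  rintro F ⟨A, ps, hcard, hpslen, hperm, hF⟩
  set M := A.toList with hM
  have hMnd : M.Nodup := A.nodup_toList
  have hMlen : M.length = ramBound c s := by rw [hM, Finset.length_toList, hcard]
  have hqs : ∀ q ∈ ps, q.Nodup ∧ ∀ x ∈ M, x ∈ q := by
    intro q hqmem
    refine ⟨(hperm q hqmem).1, fun x hx => ?_⟩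
    have hxA : x ∈ A := Finset.mem_toList.1 hx
    rw [← (hperm q hqmem).2] at hxA
    exact List.mem_toFinset.1 hxA
  obtain ⟨L, hLsub, hLlen, hLor⟩ := ramsey c ps M hMnd (by rw [hpslen, hMlen]) hqs
  have hLnd : L.Nodup := hMnd.sublist hLsub
  -- sum decomposition
  have hsum : e.sum = (e.take m).sum + em + (e.drop (m+1)).sum := by
    conv_lhs => rw [← List.take_append_drop m e, List.drop_eq_getElem_cons hm]
    rw [List.sum_append, List.sum_cons]
    rw [hemdef, List.get_eq_getElem]
    ring
  have hlen : c * ((e.take m).sum + (e.drop (m+1)).sum) + (2 * em - 1) ≤ ps.length := by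
    rw [hpslen, hs]
    have h1 : e.sum - em = (e.take m).sum + (e.drop (m+1)).sum := by omega
    rw [h1]
    omega
  obtain ⟨σ, hsig⟩ := main_embed c L hLnd hLlen e m hm hem ps hLor hlen
  refine ⟨emb L c σ, emb_inj hLnd hLlen σ, ?_⟩
  rw [altBlocks_eq, hF]
  exact hsig
end
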